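/- First-order asynchronous learning (Theorem 1). Under the game setup below, assume additionally: each 𝒳_i is compact with diameter at most D; ‖G_i(x)‖ ≤ U for all x ∈ ∏_j 𝒳_j and all i; x* ∈ ∏_i 𝒳_i satisfies the Nash variational inequality ⟨G_i(x*), z − x_i*⟩ ≥ 0 for all z ∈ 𝒳_i and all i; and the quasidominance condition holds with witness r, with ε := min_i (μ_i − (1/r_i)Σ_{j≠i} r_j L_{ij}) > 0. Then there exists a constant C > 0, depending only on N, d, D, U, (μ_i), (L_{ij}), (r_i) (and not on T, B, the update schedules, or the initialization), such that the following holds: for every integer B ≥ 1, every family of update-time sets 𝕋^1,…,𝕋^N ⊆ ℕ such that every interval [t, t+B) contains at least one element of each 𝕋^i (partial asynchronism), every T that is a multiple of B with T ≥ 2B, and every initialization x_{i,1} ∈ 𝒳_i, the asynchronous projected gradient iterates defined by x_{i,t+1} = P_{𝒳_i}(x_{i,t} − η·G_i(x_t)) if t ∈ 𝕋^i and x_{i,t+1} = x_{i,t} otherwise, with step size η = B·ln(T/B)/(ε·T), satisfy max_i ‖x_{i,T} − x_i*‖² ≤ C·B³·ln(T/B)/T. -/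

import Mathlib

set_option maxHeartbeats 4000000

open scoped RealInnerProductSpace

lemma proj_inner_le {E : Type*} [NormedAddCommGroup E] [InnerProductSpace ℝ E]
    {K : Set E} (hconv : Convex ℝ K)
    {y p : E} (hp : p ∈ K)
    (hmin : ∀ z ∈ K, ‖y - p‖ ≤ ‖y - z‖) :
    ∀ z ∈ K, ⟪y - p, z - p⟫ ≤ 0 := by
  haveI : Nonempty K := ⟨⟨p, hp⟩⟩
  rw [← norm_eq_iInf_iff_real_inner_le_zero hconv hp]
  refine le_antisymm (le_ciInf fun w => hmin w w.2) ?_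
  have hbdd : BddBelow (Set.range fun w : K => ‖y - (w : E)‖) := by
    refine ⟨0, ?_⟩
    rintro _ ⟨w, rfl⟩
    exact norm_nonneg _
  exact ciInf_le hbdd ⟨p, hp⟩

lemma two_proj_contraction {E : Type*} [NormedAddCommGroup E] [InnerProductSpace ℝ E]
    {p q u v : E} (h1 : ⟪u - p, q - p⟫ ≤ 0) (h2 : ⟪v - q, p - q⟫ ≤ 0) :
    ‖p - q‖ ≤ ‖u - v‖ := by
  have expand : ⟪u - v, p - q⟫ = ⟪u - p, p - q⟫ + ‖p - q‖ ^ 2 + ⟪q - v, p - q⟫ := by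
    have h : u - v = (u - p) + (p - q) + (q - v) := by abel
    rw [h, inner_add_left, inner_add_left, real_inner_self_eq_norm_sq]
  have h1' : 0 ≤ ⟪u - p, p - q⟫ := by
    have h : p - q = -(q - p) := by abel
    rw [h, inner_neg_right]; linarith
  have h2' : 0 ≤ ⟪q - v, p - q⟫ := by
    have h : q - v = -(v - q) := by abel
    rw [h, inner_neg_left]; linarith
  have key : ‖p - q‖ ^ 2 ≤ ⟪u - v, p - q⟫ := by rw [expand]; linarith
  have hcs : ⟪u - v, p - q⟫ ≤ ‖u - v‖ * ‖p - q‖ := real_inner_le_norm _ _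
  rcases eq_or_lt_of_le (norm_nonneg (p - q)) with h0 | h0
  · rw [← h0]; exact norm_nonneg _
  · nlinarith [norm_nonneg (u - v)]

lemma cross_lipschitz {N d : ℕ} (𝒳 : Fin N → Set (EuclideanSpace ℝ (Fin d)))
    (G : Fin N → (Fin N → EuclideanSpace ℝ (Fin d)) → EuclideanSpace ℝ (Fin d))
    (L : Fin N → Fin N → ℝ)
    (hlip : ∀ i j (x : Fin N → EuclideanSpace ℝ (Fin d)), (∀ k, x k ∈ 𝒳 k) →
      ∀ yj ∈ 𝒳 j, ‖G i x - G i (Function.update x j yj)‖ ≤ L i j * ‖x j - yj‖)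
    (i : Fin N) (xx yy : Fin N → EuclideanSpace ℝ (Fin d))
    (hx : ∀ k, xx k ∈ 𝒳 k) (hy : ∀ k, yy k ∈ 𝒳 k) (hi : xx i = yy i) :
    ‖G i xx - G i yy‖ ≤ ∑ j ∈ Finset.univ.erase i, L i j * ‖xx j - yy j‖ := by
  classical
  have main : ∀ S : Finset (Fin N),
      ‖G i xx - G i (fun k => if k ∈ S then yy k else xx k)‖ ≤
        ∑ j ∈ S, L i j * ‖xx j - yy j‖ := by
    intro S
    induction S using Finset.induction_on with
    | empty =>
      simp
    | insert j S hjS ih =>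
      set z : Fin N → EuclideanSpace ℝ (Fin d) := fun k => if k ∈ S then yy k else xx k with hz
      have hzmem : ∀ k, z k ∈ 𝒳 k := by
        intro k
        by_cases h : k ∈ S <;> simp [hz, h, hx k, hy k]
      have hz' : (fun k => if k ∈ insert j S then yy k else xx k) = Function.update z j (yy j) := by
        funext k
        by_cases hkj : k = j
        · subst hkj; simp [Function.update_self, hz]
        · simp [Function.update_of_ne hkj, hz, hkj, Finset.mem_insert]
      rw [hz', Finset.sum_insert hjS]
      have tri : ‖G i xx - G i (Function.update z j (yy j))‖ ≤
          ‖G i xx - G i z‖ + ‖G i z - G i (Function.update z j (yy j))‖ := by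
        have h : G i xx - G i (Function.update z j (yy j)) =
            (G i xx - G i z) + (G i z - G i (Function.update z j (yy j))) := by abel
        rw [h]; exact norm_add_le _ _
      have hstep : ‖G i z - G i (Function.update z j (yy j))‖ ≤ L i j * ‖xx j - yy j‖ := by
        have h := hlip i j z hzmem (yy j) (hy j)
        have hzj : z j = xx j := by simp [hz, hjS]
        rwa [hzj] at h
      calc ‖G i xx - G i (Function.update z j (yy j))‖
          ≤ ‖G i xx - G i z‖ + ‖G i z - G i (Function.update z j (yy j))‖ := tri
        _ ≤ (∑ j ∈ S, L i j * ‖xx j - yy j‖) + L i j * ‖xx j - yy j‖ := add_le_add ih hstep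
        _ = L i j * ‖xx j - yy j‖ + ∑ j ∈ S, L i j * ‖xx j - yy j‖ := by ring
  have hS := main (Finset.univ.erase i)
  have heq : (fun k => if k ∈ Finset.univ.erase i then yy k else xx k) = yy := by
    funext k
    by_cases hk : k = i
    · subst hk; simp [hi]
    · simp [Finset.mem_erase, hk]
  rwa [heq] at hS

lemma update_step_ineq {N d : ℕ}
    (𝒳 : Fin N → Set (EuclideanSpace ℝ (Fin d)))
    (hconvex : ∀ i, Convex ℝ (𝒳 i))
    (G : Fin N → (Fin N → EuclideanSpace ℝ (Fin d)) → EuclideanSpace ℝ (Fin d))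
    (μ : Fin N → ℝ)
    (hmono : ∀ i (x : Fin N → EuclideanSpace ℝ (Fin d)), (∀ j, x j ∈ 𝒳 j) →
      ∀ yi ∈ 𝒳 i, μ i * ‖x i - yi‖ ^ 2 ≤ ⟪G i x - G i (Function.update x i yi), x i - yi⟫)
    (L : Fin N → Fin N → ℝ)
    (hlip : ∀ i j (x : Fin N → EuclideanSpace ℝ (Fin d)), (∀ k, x k ∈ 𝒳 k) →
      ∀ yj ∈ 𝒳 j, ‖G i x - G i (Function.update x j yj)‖ ≤ L i j * ‖x j - yj‖)
    (U : ℝ)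
    (hU : ∀ i (x : Fin N → EuclideanSpace ℝ (Fin d)), (∀ j, x j ∈ 𝒳 j) → ‖G i x‖ ≤ U)
    (xstar : Fin N → EuclideanSpace ℝ (Fin d)) (hxstar : ∀ i, xstar i ∈ 𝒳 i)
    (hnash : ∀ i, ∀ z ∈ 𝒳 i, 0 ≤ ⟪G i xstar, z - xstar i⟫)
    (P : Fin N → EuclideanSpace ℝ (Fin d) → EuclideanSpace ℝ (Fin d))
    (hPmem : ∀ i y, P i y ∈ 𝒳 i)
    (hPproj : ∀ i y, ∀ z ∈ 𝒳 i, ‖y - P i y‖ ≤ ‖y - z‖)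
    (η : ℝ) (hη : 0 ≤ η)
    (i : Fin N) (xc : Fin N → EuclideanSpace ℝ (Fin d)) (hxc : ∀ k, xc k ∈ 𝒳 k) :
    ‖P i (xc i - η • G i xc) - xstar i‖ ^ 2 ≤
      ‖xc i - xstar i‖ ^ 2 - 2 * η * μ i * ‖xc i - xstar i‖ ^ 2
      + 2 * η * (∑ j ∈ Finset.univ.erase i, L i j * ‖xc j - xstar j‖) * ‖xc i - xstar i‖
      + 4 * η ^ 2 * U ^ 2 := by
  classical
  set u : EuclideanSpace ℝ (Fin d) := xc i - η • G i xc with hu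
  set p : EuclideanSpace ℝ (Fin d) := P i u with hp
  set q : EuclideanSpace ℝ (Fin d) := xstar i with hq
  set v : EuclideanSpace ℝ (Fin d) := xstar i - η • G i xstar with hv
  have h1 : ⟪u - p, q - p⟫ ≤ 0 :=
    proj_inner_le (hconvex i) (hPmem i u) (hPproj i u) q (hxstar i)
  have h2 : ⟪v - q, p - q⟫ ≤ 0 := by
    have hvq : v - q = -(η • G i xstar) := by rw [hv, hq]; abel
    rw [hvq, inner_neg_left, real_inner_smul_left]
    have h := hnash i p (hPmem i u)
    nlinarith
  have hcontr : ‖p - q‖ ≤ ‖u - v‖ := two_proj_contraction h1 h2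
  set a : EuclideanSpace ℝ (Fin d) := xc i - xstar i with ha
  set c : EuclideanSpace ℝ (Fin d) := G i xc - G i xstar with hc
  have huv : u - v = a - η • c := by rw [hu, hv, ha, hc, smul_sub]; abel
  have hexp : ‖u - v‖ ^ 2 = ‖a‖ ^ 2 - 2 * η * ⟪c, a⟫ + η ^ 2 * ‖c‖ ^ 2 := by
    rw [huv, @norm_sub_sq_real, real_inner_smul_right, norm_smul]
    rw [Real.norm_eq_abs, abs_of_nonneg hη, mul_pow, real_inner_comm]
    ring
  set xm : Fin N → EuclideanSpace ℝ (Fin d) := Function.update xc i (xstar i) with hxm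
  have hxmmem : ∀ k, xm k ∈ 𝒳 k := by
    intro k
    by_cases hk : k = i
    · subst hk; simp [hxm, Function.update_self, hxstar]
    · simp [hxm, Function.update_of_ne hk, hxc k]
  have hsplit : ⟪c, a⟫ = ⟪G i xc - G i xm, a⟫ + ⟪G i xm - G i xstar, a⟫ := by
    rw [hc, ← inner_add_left]
    congr 1
    abel
  have hmonoterm : μ i * ‖a‖ ^ 2 ≤ ⟪G i xc - G i xm, a⟫ := by
    have h := hmono i xc hxc (xstar i) (hxstar i)
    rwa [← hxm, ← ha] at h
  have hcrossnorm : ‖G i xm - G i xstar‖ ≤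
      ∑ j ∈ Finset.univ.erase i, L i j * ‖xc j - xstar j‖ := by
    have hcl := cross_lipschitz 𝒳 G L hlip i xm xstar hxmmem hxstar
      (by simp [hxm, Function.update_self])
    have hsum : ∑ j ∈ Finset.univ.erase i, L i j * ‖xm j - xstar j‖
        = ∑ j ∈ Finset.univ.erase i, L i j * ‖xc j - xstar j‖ := by
      refine Finset.sum_congr rfl fun j hj => ?_
      have hji : j ≠ i := (Finset.mem_erase.mp hj).1
      rw [hxm, Function.update_of_ne hji]
    rwa [hsum] at hcl
  have hcrossterm : -((∑ j ∈ Finset.univ.erase i, L i j * ‖xc j - xstar j‖) * ‖a‖) ≤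
      ⟪G i xm - G i xstar, a⟫ := by
    have h1' : |⟪G i xm - G i xstar, a⟫| ≤ ‖G i xm - G i xstar‖ * ‖a‖ :=
      abs_real_inner_le_norm _ _
    have h2' : ‖G i xm - G i xstar‖ * ‖a‖ ≤
        (∑ j ∈ Finset.univ.erase i, L i j * ‖xc j - xstar j‖) * ‖a‖ :=
      mul_le_mul_of_nonneg_right hcrossnorm (norm_nonneg _)
    have h3' := abs_le.mp h1'
    linarith [h3'.1]
  have hinner : μ i * ‖a‖ ^ 2
      - (∑ j ∈ Finset.univ.erase i, L i j * ‖xc j - xstar j‖) * ‖a‖ ≤ ⟪c, a⟫ := by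
    rw [hsplit]; linarith
  have hcnorm : ‖c‖ ≤ 2 * U := by
    have t1 := hU i xc hxc
    have t2 := hU i xstar hxstar
    calc ‖c‖ ≤ ‖G i xc‖ + ‖G i xstar‖ := norm_sub_le _ _
      _ ≤ 2 * U := by linarith
  have hU0 : 0 ≤ U := le_trans (norm_nonneg _) (hU i xstar hxstar)
  have hcsq : ‖c‖ ^ 2 ≤ 4 * U ^ 2 := by nlinarith [norm_nonneg c]
  have hfinal : ‖p - q‖ ^ 2 ≤ ‖u - v‖ ^ 2 := by
    nlinarith [norm_nonneg (p - q), norm_nonneg (u - v)]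
  calc ‖p - q‖ ^ 2 ≤ ‖u - v‖ ^ 2 := hfinal
    _ = ‖a‖ ^ 2 - 2 * η * ⟪c, a⟫ + η ^ 2 * ‖c‖ ^ 2 := hexp
    _ ≤ ‖a‖ ^ 2 - 2 * η * μ i * ‖a‖ ^ 2
        + 2 * η * (∑ j ∈ Finset.univ.erase i, L i j * ‖xc j - xstar j‖) * ‖a‖
        + 4 * η ^ 2 * U ^ 2 := by
          have hmul := mul_le_mul_of_nonneg_left hinner (by linarith : (0:ℝ) ≤ 2 * η)
          have hmul2 := mul_le_mul_of_nonneg_left hcsq (sq_nonneg η)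
          nlinarith

theorem firstOrder_asynchronous_last_iterate_convergence {N d : ℕ} [NeZero N]
    (𝒳 : Fin N → Set (EuclideanSpace ℝ (Fin d)))
    (hclosed : ∀ i, IsClosed (𝒳 i)) (hconvex : ∀ i, Convex ℝ (𝒳 i))
    (hcompact : ∀ i, IsCompact (𝒳 i))
    (D : ℝ) (hD : ∀ i, ∀ z ∈ 𝒳 i, ∀ w ∈ 𝒳 i, ‖z - w‖ ≤ D)
    (G : Fin N → (Fin N → EuclideanSpace ℝ (Fin d)) → EuclideanSpace ℝ (Fin d))
    (μ : Fin N → ℝ) (hμ : ∀ i, 0 < μ i)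
    (hmono : ∀ i (x : Fin N → EuclideanSpace ℝ (Fin d)), (∀ j, x j ∈ 𝒳 j) →
      ∀ yi ∈ 𝒳 i, μ i * ‖x i - yi‖ ^ 2 ≤ ⟪G i x - G i (Function.update x i yi), x i - yi⟫)
    (L : Fin N → Fin N → ℝ) (hL : ∀ i j, 0 ≤ L i j)
    (hlip : ∀ i j (x : Fin N → EuclideanSpace ℝ (Fin d)), (∀ k, x k ∈ 𝒳 k) →
      ∀ yj ∈ 𝒳 j, ‖G i x - G i (Function.update x j yj)‖ ≤ L i j * ‖x j - yj‖)
    (U : ℝ)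
    (hU : ∀ i (x : Fin N → EuclideanSpace ℝ (Fin d)), (∀ j, x j ∈ 𝒳 j) → ‖G i x‖ ≤ U)
    (xstar : Fin N → EuclideanSpace ℝ (Fin d)) (hxstar : ∀ i, xstar i ∈ 𝒳 i)
    (hnash : ∀ i, ∀ z ∈ 𝒳 i, 0 ≤ ⟪G i xstar, z - xstar i⟫)
    (r : Fin N → ℝ) (hr : ∀ i, 0 < r i)
    (hq : ∀ i, ∑ j ∈ Finset.univ.erase i, r j * L i j < r i * μ i)
    (ε : ℝ)
    (hεdef : ε = Finset.univ.inf' Finset.univ_nonempty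
      (fun i => μ i - (1 / r i) * ∑ j ∈ Finset.univ.erase i, r j * L i j))
    (hεpos : 0 < ε)
    (P : Fin N → EuclideanSpace ℝ (Fin d) → EuclideanSpace ℝ (Fin d))
    (hPmem : ∀ i y, P i y ∈ 𝒳 i)
    (hPproj : ∀ i y, ∀ z ∈ 𝒳 i, ‖y - P i y‖ ≤ ‖y - z‖) :
    ∃ C > (0 : ℝ), ∀ (B : ℕ), 1 ≤ B →
      ∀ 𝕋 : Fin N → Set ℕ,
        (∀ i t, ∃ s ∈ 𝕋 i, t ≤ s ∧ s < t + B) →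
      ∀ T : ℕ, B ∣ T → 2 * B ≤ T →
      ∀ η : ℝ, η = (B : ℝ) * Real.log ((T : ℝ) / (B : ℝ)) / (ε * (T : ℝ)) →
      ∀ x : ℕ → Fin N → EuclideanSpace ℝ (Fin d),
        (∀ i, x 1 i ∈ 𝒳 i) →
        (∀ t, 1 ≤ t → ∀ i, t ∈ 𝕋 i →
          x (t + 1) i = P i (x t i - η • G i (x t))) →
        (∀ t, 1 ≤ t → ∀ i, t ∉ 𝕋 i → x (t + 1) i = x t i) →
      ∀ i, ‖x T i - xstar i‖ ^ 2 ≤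
        C * (B : ℝ) ^ 3 * Real.log ((T : ℝ) / (B : ℝ)) / (T : ℝ) := by
  classical
  have hNpos : 0 < N := Nat.pos_of_ne_zero (NeZero.ne N)
  set i0 : Fin N := ⟨0, hNpos⟩ with hi0
  set rmin : ℝ := Finset.univ.inf' Finset.univ_nonempty r with hrmindef
  set rmax : ℝ := Finset.univ.sup' Finset.univ_nonempty r with hrmaxdef
  set μmax : ℝ := Finset.univ.sup' Finset.univ_nonempty μ with hμmaxdef
  have hrmin_le : ∀ j, rmin ≤ r j := fun j => Finset.inf'_le _ (Finset.mem_univ j)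
  have hrmax_ge : ∀ j, r j ≤ rmax := fun j => Finset.le_sup' _ (Finset.mem_univ j)
  have hμmax_ge : ∀ j, μ j ≤ μmax := fun j => Finset.le_sup' _ (Finset.mem_univ j)
  have hrmin_pos : 0 < rmin := by
    obtain ⟨j, _, hj⟩ := Finset.exists_mem_eq_inf' (Finset.univ_nonempty) r
    rw [hrmindef, hj]; exact hr j
  have hμmax_pos : 0 < μmax := lt_of_lt_of_le (hμ i0) (hμmax_ge i0)
  have hrmax_pos : 0 < rmax := lt_of_lt_of_le (hr i0) (hrmax_ge i0)
  have hcnonneg : ∀ j, 0 ≤ (1 / r j) * ∑ k ∈ Finset.univ.erase j, r k * L j k := by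
    intro j
    refine mul_nonneg (one_div_nonneg.mpr (hr j).le) (Finset.sum_nonneg fun k _ => ?_)
    exact mul_nonneg (hr k).le (hL j k)
  have hε_le : ∀ j, ε ≤ μ j - (1 / r j) * ∑ k ∈ Finset.univ.erase j, r k * L j k := by
    intro j
    rw [hεdef]
    exact Finset.inf'_le _ (Finset.mem_univ j)
  have hεμ : ∀ j, ε ≤ μ j := fun j => le_trans (hε_le j) (by linarith [hcnonneg j])
  have hεμmax : ε ≤ μmax := le_trans (hεμ i0) (hμmax_ge i0)
  have hD0 : 0 ≤ D := le_trans (norm_nonneg _) (hD i0 _ (hxstar i0) _ (hxstar i0))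
  have hU0 : 0 ≤ U := le_trans (norm_nonneg _) (hU i0 xstar hxstar)
  clear_value i0 rmin rmax μmax
  set κ : ℝ := 4 * U ^ 2 / rmin ^ 2 with hκdef
  have hκ0 : 0 ≤ κ := by positivity
  clear_value κ
  set η₀ : ℝ := 1 / (2 * μmax) with hη₀def
  have hη₀pos : 0 < η₀ := by positivity
  clear_value η₀
  have hlog2 : 0 < Real.log 2 := Real.log_pos (by norm_num)
  set A₁ : ℝ := D ^ 2 / (rmin ^ 2 * Real.log 2) + κ / ε ^ 2 + κ * η₀ / ε with hA₁def
  have hA₁0 : 0 ≤ A₁ := by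
    rw [hA₁def]
    have t1 : 0 ≤ D ^ 2 / (rmin ^ 2 * Real.log 2) :=
      div_nonneg (sq_nonneg D) (mul_nonneg (sq_nonneg rmin) hlog2.le)
    have t2 : 0 ≤ κ / ε ^ 2 := by positivity
    have t3 : 0 ≤ κ * η₀ / ε := by positivity
    linarith
  clear_value A₁
  set C : ℝ := rmax ^ 2 * A₁ + 2 * μmax * D ^ 2 / ε + 1 with hCdef
  have hC2 : 0 ≤ 2 * μmax * D ^ 2 / ε := by positivity
  have hCpos : 0 < C := by
    have : 0 ≤ rmax ^ 2 * A₁ := mul_nonneg (by positivity) hA₁0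
    rw [hCdef]; linarith
  clear_value C
  refine ⟨C, hCpos, ?_⟩
  intro B hB 𝕋 hsch T hdvd hTB η hη x hx1 hupd hnoupd
  -- basic numerics
  have hBpos : 0 < B := hB
  have hB1 : (1 : ℝ) ≤ (B : ℝ) := by exact_mod_cast hB
  have hBR : (0 : ℝ) < (B : ℝ) := by linarith
  have hTpos : 0 < T := by omega
  have hT1 : 1 ≤ T := hTpos
  have hTR : (0 : ℝ) < (T : ℝ) := by exact_mod_cast hTpos
  have hTBR : (2 : ℝ) * (B : ℝ) ≤ (T : ℝ) := by exact_mod_cast hTB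
  have hTB2 : (2 : ℝ) ≤ (T : ℝ) / (B : ℝ) := by
    rw [le_div_iff₀ hBR]; linarith
  set lg : ℝ := Real.log ((T : ℝ) / (B : ℝ)) with hlgdef
  have hlg2 : Real.log 2 ≤ lg := by
    rw [hlgdef]
    exact (Real.log_le_log_iff (by norm_num) (by linarith)).mpr hTB2
  have hlgpos : 0 < lg := lt_of_lt_of_le hlog2 hlg2
  clear_value lg
  have hηpos : 0 < η := by rw [hη]; positivity
  have hεne : ε ≠ 0 := ne_of_gt hεpos
  have hTne : (T : ℝ) ≠ 0 := ne_of_gt hTR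
  have hηεid : η * ε = (B : ℝ) * lg / (T : ℝ) := by
    rw [hη]; field_simp
  -- membership of iterates
  have hmem : ∀ t, 1 ≤ t → ∀ j, x t j ∈ 𝒳 j := by
    intro t ht
    induction t, ht using Nat.le_induction with
    | base => exact hx1
    | succ t ht ih =>
      intro j
      by_cases hj : t ∈ 𝕋 j
      · rw [hupd t ht j hj]; exact hPmem j _
      · rw [hnoupd t ht j hj]; exact ih j
  have hxTD : ∀ i, ‖x T i - xstar i‖ ≤ D := fun i =>
    hD i _ (hmem T hT1 i) _ (hxstar i)
  intro i
  have hYid : (B:ℝ)^3 * lg / (T:ℝ) = ε * η * (B:ℝ)^2 := by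
    rw [hη]; field_simp
  have hY0 : 0 ≤ (B:ℝ)^3 * lg / (T:ℝ) :=
    div_nonneg (mul_nonneg (by positivity) hlgpos.le) hTR.le
  by_cases hsmall : η * (B:ℝ) ≤ η₀
  swap
  · -- trivial regime : big step size
    push_neg at hsmall
    have hLHS : ‖x T i - xstar i‖ ^ 2 ≤ D ^ 2 :=
      pow_le_pow_left₀ (norm_nonneg _) (hxTD i) 2
    have hYlb : ε * η₀ ≤ (B:ℝ)^3 * lg / (T:ℝ) := by
      rw [hYid]
      have s2 : ε*η₀ ≤ ε*(η*(B:ℝ)) := mul_le_mul_of_nonneg_left hsmall.le hεpos.le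
      have s4 : ε*η*(B:ℝ)*1 ≤ ε*η*(B:ℝ)*(B:ℝ) :=
        mul_le_mul_of_nonneg_left hB1 (by positivity)
      linarith only [s2, s4]
    have hid : (2*μmax*D^2/ε) * (ε*η₀) = D^2 := by
      rw [hη₀def]; field_simp
    have hCge : 2*μmax*D^2/ε ≤ C := by
      rw [hCdef]; linarith only [mul_nonneg (sq_nonneg rmax) hA₁0]
    calc ‖x T i - xstar i‖^2 ≤ D^2 := hLHS
      _ = (2*μmax*D^2/ε) * (ε*η₀) := hid.symm
      _ ≤ (2*μmax*D^2/ε) * ((B:ℝ)^3*lg/(T:ℝ)) := mul_le_mul_of_nonneg_left hYlb hC2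
      _ ≤ C * ((B:ℝ)^3*lg/(T:ℝ)) := mul_le_mul_of_nonneg_right hCge hY0
      _ = C * (B:ℝ)^3 * lg / (T:ℝ) := by ring
  -- main regime : small step size
  have hηη₀ : η ≤ η₀ := by
    have s1 : η*1 ≤ η*(B:ℝ) := mul_le_mul_of_nonneg_left hB1 hηpos.le
    linarith only [s1, hsmall]
  have hμmax_half : η * μmax ≤ 1/2 := by
    have h3 : η * μmax ≤ η₀ * μmax := mul_le_mul_of_nonneg_right hηη₀ hμmax_pos.le
    have h4 : η₀ * μmax = 1/2 := by rw [hη₀def]; field_simp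
    linarith
  have hμη1 : ∀ j, 0 ≤ 1 - 2*η*μ j := by
    intro j
    have h1 : η * μ j ≤ η * μmax := mul_le_mul_of_nonneg_left (hμmax_ge j) hηpos.le
    linarith
  have hηε1 : 0 ≤ 1 - 2*η*ε := by
    have h1 : η * ε ≤ η * μmax := mul_le_mul_of_nonneg_left hεμmax hηpos.le
    linarith
  set w : ℕ → Fin N → ℝ := fun t j => ‖x t j - xstar j‖ / r j with hwdef
  set Φ : ℕ → ℝ := fun t => Finset.univ.sup' Finset.univ_nonempty (w t) with hΦdef
  have hw0 : ∀ t j, 0 ≤ w t j := fun t j => div_nonneg (norm_nonneg _) (hr j).le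
  have hwΦ : ∀ t j, w t j ≤ Φ t := fun t j => Finset.le_sup' _ (Finset.mem_univ j)
  have hΦ0 : ∀ t, 0 ≤ Φ t := fun t => le_trans (hw0 t i0) (hwΦ t i0)
  have hΦatt : ∀ t, ∃ j, Φ t = w t j := by
    intro t
    obtain ⟨j, _, hj⟩ := Finset.exists_mem_eq_sup' Finset.univ_nonempty (w t)
    exact ⟨j, hj⟩
  have hwna : ∀ t j, ‖x t j - xstar j‖ = r j * w t j := by
    intro t j
    simp only [hwdef]
    rw [mul_comm, div_mul_cancel₀ _ (hr j).ne']
  clear_value w Φ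
  -- F3 : one-step contraction for an updating agent
  have F3 : ∀ t, 1 ≤ t → ∀ j, t ∈ 𝕋 j →
      (w (t+1) j)^2 ≤ (1 - 2*η*ε)*(Φ t)^2 + κ*η^2 := by
    intro t ht j hj
    have key := update_step_ineq 𝒳 hconvex G μ hmono L hlip U hU xstar hxstar hnash
      P hPmem hPproj η hηpos.le j (x t) (hmem t ht)
    rw [← hupd t ht j hj] at key
    set S : ℝ := ∑ k ∈ Finset.univ.erase j, L j k * ‖x t k - xstar k‖ with hSdef
    have hSle : S ≤ r j * (μ j - ε) * Φ t := by
      have hterm : ∀ k ∈ Finset.univ.erase j,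
          L j k * ‖x t k - xstar k‖ ≤ (r k * L j k) * Φ t := by
        intro k _
        rw [hwna t k]
        have h2 : L j k * r k * w t k ≤ L j k * r k * Φ t :=
          mul_le_mul_of_nonneg_left (hwΦ t k) (mul_nonneg (hL j k) (hr k).le)
        linarith only [h2]
      have hsum := Finset.sum_le_sum hterm
      rw [← Finset.sum_mul] at hsum
      have h2 : (1/r j) * (∑ k ∈ Finset.univ.erase j, r k * L j k) ≤ μ j - ε := by
        linarith [hε_le j]
      have h3 := mul_le_mul_of_nonneg_left h2 (hr j).le
      have h4 : r j * ((1/r j) * (∑ k ∈ Finset.univ.erase j, r k * L j k))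
          = ∑ k ∈ Finset.univ.erase j, r k * L j k := by
        rw [one_div, mul_inv_cancel_left₀ (hr j).ne']
      rw [h4] at h3
      have h5 : (∑ k ∈ Finset.univ.erase j, r k * L j k) * Φ t ≤ (r j * (μ j - ε)) * Φ t :=
        mul_le_mul_of_nonneg_right h3 (hΦ0 t)
      calc S ≤ (∑ k ∈ Finset.univ.erase j, r k * L j k) * Φ t := hsum
        _ ≤ (r j * (μ j - ε)) * Φ t := h5
        _ = r j * (μ j - ε) * Φ t := by ring
    clear_value S
    have hrj2 : (0:ℝ) < (r j)^2 := pow_pos (hr j) 2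
    have hgoal : w (t+1) j = ‖x (t+1) j - xstar j‖ / r j := by simp only [hwdef]
    rw [hgoal, div_pow, div_le_iff₀ hrj2]
    have hnaΦ : ‖x t j - xstar j‖ ≤ r j * Φ t := by
      rw [hwna t j]
      exact mul_le_mul_of_nonneg_left (hwΦ t j) (hr j).le
    have hκr : 4*U^2 ≤ κ * (r j)^2 := by
      rw [hκdef]
      rw [div_mul_eq_mul_div, le_div_iff₀ (by positivity : (0:ℝ) < rmin^2)]
      have p1 : rmin^2 ≤ (r j)^2 := pow_le_pow_left₀ hrmin_pos.le (hrmin_le j) 2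
      have p2 := mul_le_mul_of_nonneg_left p1 (by positivity : (0:ℝ) ≤ 4*U^2)
      linarith only [p2]
    have e1 : 2*η*S*‖x t j - xstar j‖ ≤ 2*η*(r j*(μ j - ε)*Φ t)*‖x t j - xstar j‖ :=
      mul_le_mul_of_nonneg_right
        (mul_le_mul_of_nonneg_left hSle (by linarith [hηpos.le] : (0:ℝ) ≤ 2*η)) (norm_nonneg _)
    have e2 : 2*η*(r j*(μ j - ε)*Φ t)*‖x t j - xstar j‖
        ≤ 2*η*(r j*(μ j - ε)*Φ t)*(r j*Φ t) := by
      refine mul_le_mul_of_nonneg_left hnaΦ ?_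
      have c1 : (0:ℝ) ≤ μ j - ε := by linarith only [hεμ j]
      exact mul_nonneg (by linarith only [hηpos] : (0:ℝ) ≤ 2*η)
        (mul_nonneg (mul_nonneg (hr j).le c1) (hΦ0 t))
    have e3 : (1-2*η*μ j)*‖x t j - xstar j‖^2 ≤ (1-2*η*μ j)*(r j*Φ t)^2 :=
      mul_le_mul_of_nonneg_left
        (pow_le_pow_left₀ (norm_nonneg _) hnaΦ 2) (hμη1 j)
    have e4 : 4*η^2*U^2 ≤ η^2*(κ*(r j)^2) := by
      have := mul_le_mul_of_nonneg_left hκr (sq_nonneg η)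
      linarith only [this]
    linarith only [key, e1, e2, e3, e4]
  -- F4 : per-step growth of the potential
  have F4 : ∀ t, 1 ≤ t → (Φ (t+1))^2 ≤ (Φ t)^2 + κ*η^2 := by
    intro t ht
    obtain ⟨j, hj⟩ := hΦatt (t+1)
    rw [hj]
    by_cases hmem𝕋 : t ∈ 𝕋 j
    · have h3 := F3 t ht j hmem𝕋
      have p1 : (0:ℝ) ≤ 2*η*ε*(Φ t)^2 := by positivity
      linarith only [h3, p1]
    · have heq : w (t+1) j = w t j := by
        rw [hwdef]
        simp only
        rw [hnoupd t ht j hmem𝕋]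
      rw [heq]
      have h1 := pow_le_pow_left₀ (hw0 t j) (hwΦ t j) 2
      have p1 : (0:ℝ) ≤ κ*η^2 := mul_nonneg hκ0 (sq_nonneg η)
      linarith only [h1, p1]
  -- F5 : iterated growth
  have F5 : ∀ t, 1 ≤ t → ∀ n : ℕ, (Φ (t+n))^2 ≤ (Φ t)^2 + (n:ℝ)*κ*η^2 := by
    intro t ht n
    induction n with
    | zero => simp
    | succ n ih =>
      have h4 := F4 (t+n) (by omega)
      have hcast : ((n+1 : ℕ):ℝ) = (n:ℝ) + 1 := by push_cast; ring
      have : t + (n+1) = (t + n) + 1 := by omega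
      rw [this, hcast]
      linarith only [h4, ih]
  -- F6 : block contraction
  have F6 : ∀ t, 1 ≤ t →
      (Φ (t+B))^2 ≤ (1-2*η*ε)*((Φ t)^2 + (B:ℝ)*κ*η^2) + κ*η^2 := by
    intro t ht
    have hkey : ∀ j, (w (t+B) j)^2 ≤ (1-2*η*ε)*((Φ t)^2 + (B:ℝ)*κ*η^2) + κ*η^2 := by
      intro j
      obtain ⟨s, hsT, hts, hsB⟩ := hsch j t
      have hupd_bound : ∀ u, t ≤ u → u < t + B → u ∈ 𝕋 j →
          (w (u+1) j)^2 ≤ (1-2*η*ε)*((Φ t)^2 + (B:ℝ)*κ*η^2) + κ*η^2 := by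
        intro u htu huB hu
        have h3 := F3 u (le_trans ht htu) j hu
        have h5 := F5 t ht (u - t)
        rw [Nat.add_sub_cancel' htu] at h5
        have hcast : ((u - t : ℕ):ℝ) ≤ (B:ℝ) := by
          exact_mod_cast (by omega : u - t ≤ B)
        have h6 : (Φ u)^2 ≤ (Φ t)^2 + (B:ℝ)*κ*η^2 := by
          have pr := mul_le_mul_of_nonneg_right hcast (mul_nonneg hκ0 (sq_nonneg η))
          linarith only [h5, pr]
        have h7 : (1-2*η*ε)*(Φ u)^2 ≤ (1-2*η*ε)*((Φ t)^2 + (B:ℝ)*κ*η^2) :=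
          mul_le_mul_of_nonneg_left h6 hηε1
        linarith
      have hclaim : ∀ u, s + 1 ≤ u → u ≤ t + B →
          (w u j)^2 ≤ (1-2*η*ε)*((Φ t)^2 + (B:ℝ)*κ*η^2) + κ*η^2 := by
        intro u hu
        induction u, hu using Nat.le_induction with
        | base => intro _; exact hupd_bound s hts hsB hsT
        | succ u hu ih =>
          intro hub
          by_cases hmem𝕋 : u ∈ 𝕋 j
          · exact hupd_bound u (by omega) (by omega) hmem𝕋
          · have heq : w (u+1) j = w u j := by
              rw [hwdef]
              simp only
              rw [hnoupd u (by omega) j hmem𝕋]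
            rw [heq]
            exact ih (by omega)
      exact hclaim (t+B) (by omega) le_rfl
    obtain ⟨j, hj⟩ := hΦatt (t+B)
    rw [hj]
    exact hkey j
  -- F7 : unrolled recursion over blocks
  have F7 : ∀ k : ℕ, (Φ (1 + k*B))^2 ≤ (1-2*η*ε)^k * (Φ 1)^2 + (B:ℝ)*κ*η/ε := by
    intro k
    induction k with
    | zero =>
      have h0 : 0 ≤ (B:ℝ)*κ*η/ε := by positivity
      simp only [Nat.zero_mul, Nat.add_zero, pow_zero, one_mul]
      linarith
    | succ k ih =>
      have heq : 1 + (k+1)*B = (1 + k*B) + B := by ring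
      rw [heq]
      have h6 := F6 (1 + k*B) (by omega)
      have hmul : (1-2*η*ε)*(Φ (1+k*B))^2
          ≤ (1-2*η*ε)*((1-2*η*ε)^k*(Φ 1)^2 + (B:ℝ)*κ*η/ε) :=
        mul_le_mul_of_nonneg_left ih hηε1
      have hqd : (1-2*η*ε)*((B:ℝ)*κ*η/ε) = (B:ℝ)*κ*η/ε - 2*(B:ℝ)*κ*η^2 := by
        field_simp
      have hBκη : κ*η^2 ≤ (B:ℝ)*κ*η^2 := by
        have pr := mul_le_mul_of_nonneg_right hB1 (mul_nonneg hκ0 (sq_nonneg η))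
        linarith only [pr]
      have hq2 : 0 ≤ 2*η*ε*((B:ℝ)*κ*η^2) := by positivity
      have hpow : (1-2*η*ε)^(k+1)*(Φ 1)^2 = (1-2*η*ε)*((1-2*η*ε)^k*(Φ 1)^2) := by ring
      rw [hpow]
      linarith only [h6, hmul, hqd, hBκη, hq2]
  -- assemble the final bound
  obtain ⟨m, hm⟩ := hdvd
  have hm2 : 2 ≤ m := by
    rcases Nat.lt_or_ge m 2 with h | h
    · interval_cases m <;> omega
    · exact h
  set k : ℕ := m - 1 with hkdef
  clear_value k
  have hTn : T = k*B + B := by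
    have hmk : m = k + 1 := by omega
    rw [hm, hmk]; ring
  have hT1k : T = (1 + k*B) + (B-1) := by omega
  have h5T : (Φ T)^2 ≤ (Φ (1+k*B))^2 + ((B-1:ℕ):ℝ)*κ*η^2 := by
    have h5 := F5 (1+k*B) (by omega) (B-1)
    rw [← hT1k] at h5
    exact h5
  have h7 := F7 k
  have hk1 : 1 ≤ k := by omega
  have hkR : (1:ℝ) ≤ (k:ℝ) := by exact_mod_cast hk1
  have hTlek : (T:ℝ) ≤ 2*(B:ℝ)*(k:ℝ) := by
    have hTc : (T:ℝ) = (k:ℝ)*(B:ℝ) + (B:ℝ) := by exact_mod_cast hTn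
    have pr : (B:ℝ)*1 ≤ (B:ℝ)*(k:ℝ) := mul_le_mul_of_nonneg_left hkR hBR.le
    linarith only [hTc, pr]
  have hpowk : (1-2*η*ε)^k ≤ (B:ℝ)/(T:ℝ) := by
    have h1 : (1-2*η*ε) ≤ Real.exp (-(2*η*ε)) := by
      have := Real.add_one_le_exp (-(2*η*ε))
      linarith
    have h2 : (1-2*η*ε)^k ≤ (Real.exp (-(2*η*ε)))^k :=
      pow_le_pow_left₀ hηε1 h1 k
    have h3 : (Real.exp (-(2*η*ε)))^k = Real.exp ((k:ℝ)*(-(2*η*ε))) := by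
      rw [← Real.exp_nat_mul]
    have h4 : (k:ℝ)*(-(2*η*ε)) ≤ -lg := by
      have hqk : lg ≤ 2*η*ε*(k:ℝ) := by
        have hq1 : 2*η*ε*(k:ℝ) = 2*(B:ℝ)*lg/(T:ℝ)*(k:ℝ) := by
          rw [show 2*η*ε*(k:ℝ) = 2*(η*ε)*(k:ℝ) by ring, hηεid]
          ring
        rw [hq1]
        rw [div_mul_eq_mul_div, le_div_iff₀ hTR]
        have pr := mul_le_mul_of_nonneg_left hTlek hlgpos.le
        linarith only [pr]
      linarith
    have h5 : Real.exp ((k:ℝ)*(-(2*η*ε))) ≤ Real.exp (-lg) :=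
      Real.exp_le_exp.mpr h4
    have h6 : Real.exp (-lg) = (B:ℝ)/(T:ℝ) := by
      rw [hlgdef, Real.exp_neg, Real.exp_log (by positivity), inv_div]
    rw [h3] at h2
    rw [h6] at h5
    linarith
  have hΦ1sq : (Φ 1)^2 ≤ D^2/rmin^2 := by
    obtain ⟨j, hj⟩ := hΦatt 1
    rw [hj]
    have h1 : w 1 j ≤ D/rmin := by
      simp only [hwdef]
      exact div_le_div₀ hD0 (hD j _ (hx1 j) _ (hxstar j)) hrmin_pos (hrmin_le j)
    calc (w 1 j)^2 ≤ (D/rmin)^2 := pow_le_pow_left₀ (hw0 1 j) h1 2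
      _ = D^2/rmin^2 := div_pow D rmin 2
  have hfinΦ : (Φ T)^2 ≤ ((B:ℝ)/(T:ℝ))*(D^2/rmin^2) + (B:ℝ)*κ*η/ε + (B:ℝ)*κ*η^2 := by
    have hcastB : ((B-1:ℕ):ℝ) ≤ (B:ℝ) := by
      exact_mod_cast (by omega : B - 1 ≤ B)
    have hp1 : (1-2*η*ε)^k * (Φ 1)^2 ≤ ((B:ℝ)/(T:ℝ))*(D^2/rmin^2) := by
      have hnn : 0 ≤ (1-2*η*ε)^k := pow_nonneg hηε1 k
      have := mul_le_mul hpowk hΦ1sq (sq_nonneg (Φ 1)) (by positivity)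
      exact this
    have hp2 : ((B-1:ℕ):ℝ)*κ*η^2 ≤ (B:ℝ)*κ*η^2 := by
      have pr := mul_le_mul_of_nonneg_right hcastB (mul_nonneg hκ0 (sq_nonneg η))
      linarith only [pr]
    linarith only [h5T, h7, hp1, hp2]
  -- convert to the statement
  have hxw : ‖x T i - xstar i‖^2 = (r i)^2*(w T i)^2 := by
    rw [hwna T i]; ring
  have hwT : (w T i)^2 ≤ (Φ T)^2 := pow_le_pow_left₀ (hw0 T i) (hwΦ T i) 2
  have hLHS : ‖x T i - xstar i‖^2 ≤ rmax^2 * (Φ T)^2 := by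
    rw [hxw]
    have h1 : (r i)^2 ≤ rmax^2 := pow_le_pow_left₀ (hr i).le (hrmax_ge i) 2
    exact mul_le_mul h1 hwT (sq_nonneg (w T i)) (sq_nonneg rmax)
  -- bound each of the three terms by multiples of Y := B^3 lg / T
  set Y : ℝ := (B:ℝ)^3*lg/(T:ℝ) with hYdef
  have hYnn : 0 ≤ Y := hY0
  clear_value Y
  have ht1 : ((B:ℝ)/(T:ℝ))*(D^2/rmin^2) ≤ (D^2/(rmin^2*Real.log 2))*Y := by
    have h1 : (B:ℝ)/(T:ℝ) ≤ (B:ℝ)^3*lg/((T:ℝ)*Real.log 2) := by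
      rw [div_le_div_iff₀ hTR (by positivity)]
      have pb : (B:ℝ) ≤ (B:ℝ)^3 := le_self_pow₀ (by linarith only [hB1]) (by norm_num)
      have pr := mul_le_mul pb (mul_le_mul_of_nonneg_left hlg2 hTR.le)
        (by positivity) (by positivity : (0:ℝ) ≤ (B:ℝ)^3)
      linarith only [pr]
    have h2 : ((B:ℝ)/(T:ℝ))*(D^2/rmin^2) ≤ ((B:ℝ)^3*lg/((T:ℝ)*Real.log 2))*(D^2/rmin^2) :=
      mul_le_mul_of_nonneg_right h1 (by positivity)
    have h3 : ((B:ℝ)^3*lg/((T:ℝ)*Real.log 2))*(D^2/rmin^2) = (D^2/(rmin^2*Real.log 2))*Y := by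
      rw [hYdef]
      field_simp
    linarith only [h2, h3]
  have ht2 : (B:ℝ)*κ*η/ε ≤ (κ/ε^2)*Y := by
    have h1 : (B:ℝ)*κ*η/ε = (κ/ε^2)*((B:ℝ)^2*lg/(T:ℝ)) := by
      rw [hη]; field_simp
    rw [h1, hYdef]
    have hB3 : (B:ℝ)^2 ≤ (B:ℝ)^3 := pow_le_pow_right₀ hB1 (by norm_num)
    have h2 : (B:ℝ)^2*lg/(T:ℝ) ≤ (B:ℝ)^3*lg/(T:ℝ) := by
      rw [div_eq_mul_inv ((B:ℝ)^2*lg), div_eq_mul_inv ((B:ℝ)^3*lg)]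
      exact mul_le_mul_of_nonneg_right (mul_le_mul_of_nonneg_right hB3 hlgpos.le)
        (by positivity)
    exact mul_le_mul_of_nonneg_left h2 (by positivity)
  have ht3 : (B:ℝ)*κ*η^2 ≤ (κ*η₀/ε)*Y := by
    have e1 : (B:ℝ)*κ*η^2 ≤ κ*η₀*η := by
      have pr : κ*η*(η*(B:ℝ)) ≤ κ*η*η₀ :=
        mul_le_mul_of_nonneg_left hsmall (mul_nonneg hκ0 hηpos.le)
      linarith only [pr]
    have e2 : κ*η₀*η = (κ*η₀/ε)*((B:ℝ)*lg/(T:ℝ)) := by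
      rw [hη]; field_simp
    have hBB : (B:ℝ) ≤ (B:ℝ)^3 := le_self_pow₀ (by linarith only [hB1]) (by norm_num)
    have e3 : (κ*η₀/ε)*((B:ℝ)*lg/(T:ℝ)) ≤ (κ*η₀/ε)*Y := by
      rw [hYdef]
      refine mul_le_mul_of_nonneg_left ?_ (by positivity)
      rw [div_eq_mul_inv ((B:ℝ)*lg), div_eq_mul_inv ((B:ℝ)^3*lg)]
      exact mul_le_mul_of_nonneg_right (mul_le_mul_of_nonneg_right hBB hlgpos.le)
        (by positivity)
    linarith only [e1, e2, e3]
  have hstep : rmax^2*(Φ T)^2 ≤ rmax^2*(A₁*Y) := by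
    refine mul_le_mul_of_nonneg_left ?_ (sq_nonneg rmax)
    rw [hA₁def]
    have hexpand : (D^2/(rmin^2*Real.log 2) + κ/ε^2 + κ*η₀/ε)*Y
        = (D^2/(rmin^2*Real.log 2))*Y + (κ/ε^2)*Y + (κ*η₀/ε)*Y := by ring
    rw [hexpand]
    linarith only [hfinΦ, ht1, ht2, ht3]
  calc ‖x T i - xstar i‖^2 ≤ rmax^2*(Φ T)^2 := hLHS
    _ ≤ rmax^2*(A₁*Y) := hstep
    _ ≤ C*Y := by
        have h1 : rmax^2*A₁ ≤ C := by rw [hCdef]; linarith only [hC2]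
        have h2 := mul_le_mul_of_nonneg_right h1 hYnn
        linarith only [h2]
    _ = C*(B:ℝ)^3*lg/(T:ℝ) := by rw [hYdef]; ring
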